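/- Let 0 < δ < 1 and 0 < λ < 1. Then there exists a family {φ_ξ : ξ ∈ {0,1}^ω} of continuous increasing functions φ_ξ : [0,1] → [0,∞) such that: (1) for each ξ, the sequence u_n^ξ := φ_ξ(1/2^n) satisfies u_0^ξ = u_1^ξ = 1 and, for every n > 1, either u_n^ξ = u_{n−1}^ξ or u_n^ξ = λ·u_{n−1}^ξ + (1−λ)·max_{1≤i≤n−1}{δ·u_i^ξ·u_{n−i}^ξ}; and (2) for any two distinct ξ, ζ ∈ {0,1}^ω, liminf_{n→∞} φ_ξ(1/2^n)/φ_ζ(1/2^n) = 0 and liminf_{n→∞} φ_ζ(1/2^n)/φ_ξ(1/2^n) = 0. -/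

import Mathlib

open unitInterval

/-- The element `|y - x|` of `[0,1]`, for `x y ∈ [0,1]`. -/
noncomputable def dist01 (x y : unitInterval) : unitInterval :=
  ⟨|(y : ℝ) - (x : ℝ)|,
    abs_nonneg _,
    abs_sub_le_iff.mpr ⟨by linarith [x.2.1, x.2.2, y.2.1, y.2.2],
      by linarith [x.2.1, x.2.2, y.2.1, y.2.2]⟩⟩

/-- The relation `E_f` on `[0,1]^ω`: `(x_n) E_f (y_n)` iff `Σ f(|y_n - x_n|) < ∞`. -/
def EfRel (f : unitInterval → ℝ) (x y : ℕ → unitInterval) : Prop :=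
  Summable fun n => f (dist01 (x n) (y n))

/-- The element `1/2^n` of `[0,1]`. -/
noncomputable def half (n : ℕ) : unitInterval :=
  ⟨(1 / 2 : ℝ) ^ n, by positivity, pow_le_one₀ (by norm_num) (by norm_num)⟩

/-- Borel reducibility of binary relations. -/
def BorelReducible {X Y : Type*} [MeasurableSpace X] [MeasurableSpace Y]
    (E : X → X → Prop) (F : Y → Y → Prop) : Prop :=
  ∃ θ : X → Y, Measurable θ ∧ ∀ x x', E x x' ↔ F (θ x) (θ x')

/-- The `ℓ_p` equivalence relation on `ℝ^ω`. -/
def lpRel (p : ℝ) (x y : ℕ → ℝ) : Prop :=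
  Summable fun n => |x n - y n| ^ p

/-- `max_{1 ≤ i ≤ n-1} δ · u_i · u_{n-i}`. -/
noncomputable def maxTerm (δ : ℝ) (u : ℕ → ℝ) (n : ℕ) : ℝ :=
  sSup ((fun i => δ * u i * u (n - i)) '' Set.Icc 1 (n - 1))


namespace PhiAux

def ms (s : ℕ) : ℕ := (Nat.unpair (s / 2)).2 + 1
def js (s : ℕ) : ℕ := (Nat.unpair (s / 2)).1

def T : ℕ → ℕ
  | 0 => 0
  | s + 1 => T s + 2 * ms s

lemma one_le_ms (s : ℕ) : 1 ≤ ms s := Nat.succ_le_succ (Nat.zero_le _)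

lemma two_mul_le_T : ∀ s, 2 * s ≤ T s
  | 0 => by simp [T]
  | s + 1 => by
    have h1 := two_mul_le_T s
    have h2 := one_le_ms s
    simp only [T]; omega

lemma T_mono : Monotone T :=
  monotone_nat_of_le_succ fun s => by have := one_le_ms s; simp only [T]; omega

def stageOf (k : ℕ) : ℕ := Nat.findGreatest (fun s => T s ≤ k) k

lemma stageOf_eq {s k : ℕ} (h1 : T s ≤ k) (h2 : k < T (s + 1)) : stageOf k = s := by
  have hsk : s ≤ k := le_trans (by omega) (le_trans (two_mul_le_T s) h1)
  refine Nat.findGreatest_eq_iff.2 ⟨hsk, fun _ => h1, fun n hn _ hTn => ?_⟩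
  exact absurd hTn (not_le.2 (lt_of_lt_of_le h2 (T_mono (by omega : s + 1 ≤ n))))

def fc (ξ : ℕ → Bool) (s : ℕ) : Bool := xor (ξ (js s)) (decide (s % 2 = 1))

def sel (ξ : ℕ → Bool) (k : ℕ) : Bool :=
  if k < T (stageOf k) + ms (stageOf k) then fc ξ (stageOf k) else !(fc ξ (stageOf k))

lemma sel_first {ξ : ℕ → Bool} {s k : ℕ} (h1 : T s ≤ k) (h2 : k < T s + ms s) :
    sel ξ k = fc ξ s := by
  have hst : stageOf k = s := stageOf_eq h1 (by simp only [T]; have := one_le_ms s; omega)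
  simp [sel, hst, h2]

lemma sel_second {ξ : ℕ → Bool} {s k : ℕ} (h1 : T s + ms s ≤ k) (h2 : k < T (s + 1)) :
    sel ξ k = !(fc ξ s) := by
  have hst : stageOf k = s := stageOf_eq (le_trans (Nat.le_add_right _ _) h1) h2
  simp [sel, hst, not_lt.2 h1]

def S (ξ : ℕ → Bool) (E : ℕ) : ℕ := ((Finset.range E).filter (fun k => sel ξ k = true)).card

def Cs : ℕ → ℕ
  | 0 => 0
  | s + 1 => Cs s + ms s

lemma le_Cs : ∀ s, s ≤ Cs s
  | 0 => le_refl 0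
  | s + 1 => by have := le_Cs s; have := one_le_ms s; simp only [Cs]; omega

lemma S_split (ξ : ℕ → Bool) (a b : ℕ) :
    S ξ (a + b) = S ξ a + ((Finset.Ico a (a + b)).filter (fun k => sel ξ k = true)).card := by
  unfold S
  have hsplit : Finset.range (a + b) = Finset.range a ∪ Finset.Ico a (a + b) := by
    rw [Finset.range_eq_Ico, Finset.range_eq_Ico]
    exact (Finset.Ico_union_Ico_eq_Ico (Nat.zero_le a) (Nat.le_add_right a b)).symm
  rw [hsplit, Finset.filter_union, Finset.card_union_of_disjoint]
  exact Finset.disjoint_filter_filter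
    (by rw [Finset.range_eq_Ico]; exact Finset.Ico_disjoint_Ico_consecutive 0 a (a + b))

lemma card_first (ξ : ℕ → Bool) (s : ℕ) :
    ((Finset.Ico (T s) (T s + ms s)).filter (fun k => sel ξ k = true)).card
      = if fc ξ s then ms s else 0 := by
  cases hfc : fc ξ s
  · simp only [hfc, Bool.false_eq_true, if_false]
    rw [Finset.filter_false_of_mem, Finset.card_empty]
    intro k hk
    rw [Finset.mem_Ico] at hk
    rw [sel_first hk.1 hk.2, hfc]
    simp
  · simp only [hfc, if_true]
    rw [Finset.filter_true_of_mem, Nat.card_Ico]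
    · omega
    · intro k hk
      rw [Finset.mem_Ico] at hk
      rw [sel_first hk.1 hk.2, hfc]

lemma card_second (ξ : ℕ → Bool) (s : ℕ) :
    ((Finset.Ico (T s + ms s) (T (s + 1))).filter (fun k => sel ξ k = true)).card
      = if fc ξ s then 0 else ms s := by
  cases hfc : fc ξ s
  · simp only [hfc, Bool.false_eq_true, if_false]
    rw [Finset.filter_true_of_mem, Nat.card_Ico]
    · simp only [T]; omega
    · intro k hk
      rw [Finset.mem_Ico] at hk
      rw [sel_second hk.1 hk.2, hfc]
      rfl
  · simp only [hfc, if_true]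
    rw [Finset.filter_false_of_mem, Finset.card_empty]
    intro k hk
    rw [Finset.mem_Ico] at hk
    rw [sel_second hk.1 hk.2, hfc]
    simp

lemma S_T (ξ : ℕ → Bool) : ∀ s, S ξ (T s) = Cs s
  | 0 => by simp [S, T, Cs]
  | s + 1 => by
    have hT : T (s + 1) = (T s + ms s) + ms s := by simp only [T]; omega
    have h2 : ((Finset.Ico (T s + ms s) ((T s + ms s) + ms s)).filter
        (fun k => sel ξ k = true)).card = if fc ξ s then 0 else ms s := by
      rw [← hT, card_second]
    rw [hT, S_split, S_split, S_T ξ s, card_first, h2]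
    cases fc ξ s <;> simp [Cs]

lemma S_mid (ξ : ℕ → Bool) (s : ℕ) :
    S ξ (T s + ms s) = Cs s + if fc ξ s then ms s else 0 := by
  rw [S_split, card_first, S_T]



def bcount (ξ : ℕ → Bool) (n : ℕ) : ℕ :=
  ((Finset.range n).filter (fun k => 2 ^ (k + 1) ≤ n ∧ sel ξ k = true)).card

lemma bcount_mono (ξ : ℕ → Bool) : Monotone (bcount ξ) := by
  intro a b hab
  apply Finset.card_le_card
  intro k hk
  simp only [Finset.mem_filter, Finset.mem_range] at hk ⊢
  exact ⟨lt_of_lt_of_le hk.1 hab, le_trans hk.2.1 hab, hk.2.2⟩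

lemma bcount_pow (ξ : ℕ → Bool) (E : ℕ) : bcount ξ (2 ^ E) = S ξ E := by
  unfold bcount S
  congr 1
  apply Finset.ext
  intro k
  simp only [Finset.mem_filter, Finset.mem_range]
  constructor
  · rintro ⟨hk, hpow, hsel⟩
    have : k + 1 ≤ E := (Nat.pow_le_pow_iff_right (by norm_num)).1 hpow
    exact ⟨by omega, hsel⟩
  · rintro ⟨hk, hsel⟩
    exact ⟨lt_of_lt_of_le (Nat.lt_two_pow_self (n := k))
        (Nat.pow_le_pow_right (by norm_num) (by omega)),
      Nat.pow_le_pow_right (by norm_num) (by omega), hsel⟩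

lemma bcount_pred_pow (ξ : ℕ → Bool) (K : ℕ) : bcount ξ (2 ^ (K + 1) - 1) = S ξ K := by
  have h1 : (1 : ℕ) ≤ 2 ^ (K + 1) := Nat.one_le_two_pow
  have h2K : 2 ^ K ≤ 2 ^ (K + 1) - 1 := by
    have : 2 ^ (K + 1) = 2 * 2 ^ K := by rw [pow_succ]; ring
    have : 1 ≤ 2 ^ K := Nat.one_le_two_pow
    omega
  unfold bcount S
  congr 1
  apply Finset.ext
  intro k
  simp only [Finset.mem_filter, Finset.mem_range]
  constructor
  · rintro ⟨hk, hpow, hsel⟩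
    have hlt : 2 ^ (k + 1) < 2 ^ (K + 1) := by omega
    have : k + 1 < K + 1 := (Nat.pow_lt_pow_iff_right (by norm_num)).1 hlt
    exact ⟨by omega, hsel⟩
  · rintro ⟨hk, hsel⟩
    have hle : 2 ^ (k + 1) ≤ 2 ^ K := Nat.pow_le_pow_right (by norm_num) (by omega)
    exact ⟨lt_of_lt_of_le (Nat.lt_two_pow_self (n := k))
        (le_trans (Nat.pow_le_pow_right (by norm_num) (by omega)) h2K),
      le_trans hle h2K, hsel⟩

lemma bcount_stay (ξ : ℕ → Bool) (n : ℕ) (hn : 1 ≤ n)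
    (h : ∀ k, 2 ^ (k + 1) = n → sel ξ k = false) :
    bcount ξ n = bcount ξ (n - 1) := by
  unfold bcount
  congr 1
  apply Finset.ext
  intro k
  simp only [Finset.mem_filter, Finset.mem_range]
  constructor
  · rintro ⟨hk, hpow, hsel⟩
    have hne : 2 ^ (k + 1) ≠ n := fun he => by
      have := h k he; rw [hsel] at this; exact Bool.noConfusion this
    have hk2 : k < 2 ^ (k + 1) := (Nat.lt_two_pow_self (n := k)) |>.trans_le
      (Nat.pow_le_pow_right (by norm_num) (by omega))
    exact ⟨by omega, by omega, hsel⟩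
  · rintro ⟨hk, hpow, hsel⟩
    exact ⟨by omega, by omega, hsel⟩

lemma bcount_drop (ξ : ℕ → Bool) (K : ℕ) (hsel : sel ξ K = true) :
    bcount ξ (2 ^ (K + 1)) = bcount ξ (2 ^ (K + 1) - 1) + 1 := by
  rw [bcount_pow, bcount_pred_pow]
  unfold S
  rw [Finset.range_add_one, Finset.filter_insert, if_pos hsel,
    Finset.card_insert_of_notMem]
  intro hmem
  have := Finset.mem_of_mem_filter K hmem
  simp at this

lemma bcount_pred_le {ξ : ℕ → Bool} {K m : ℕ} (hm : 2 ^ K ≤ m) :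
    bcount ξ (2 ^ (K + 1) - 1) ≤ bcount ξ m := by
  apply Finset.card_le_card
  intro k hk
  simp only [Finset.mem_filter, Finset.mem_range] at hk ⊢
  obtain ⟨hk1, hk2, hk3⟩ := hk
  have h1 : (1 : ℕ) ≤ 2 ^ (K + 1) := Nat.one_le_two_pow
  have hlt : 2 ^ (k + 1) < 2 ^ (K + 1) := by omega
  have hkK : k + 1 ≤ K := by
    have := (Nat.pow_lt_pow_iff_right (by norm_num : 1 < 2)).1 hlt; omega
  have h2 : 2 ^ (k + 1) ≤ 2 ^ K := Nat.pow_le_pow_right (by norm_num) hkK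
  exact ⟨lt_of_lt_of_le (Nat.lt_two_pow_self (n := k))
      (le_trans (Nat.pow_le_pow_right (by norm_num) (by omega)) hm),
    le_trans h2 hm, hk3⟩

lemma bcount_C {ξ : ℕ → Bool} {K i : ℕ} (hi : i ≤ 2 ^ (K + 1)) :
    bcount ξ (2 ^ (K + 1) - 1) ≤ bcount ξ i + bcount ξ (2 ^ (K + 1) - i) := by
  rcases le_or_gt (2 ^ K) i with h | h
  · exact le_trans (bcount_pred_le h) (Nat.le_add_right _ _)
  · have hpow : 2 ^ (K + 1) = 2 * 2 ^ K := by rw [pow_succ]; ring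
    have h2 : 2 ^ K ≤ 2 ^ (K + 1) - i := by omega
    exact le_trans (bcount_pred_le h2) (Nat.le_add_left _ _)

lemma bcount_zero (ξ : ℕ → Bool) : bcount ξ 0 = 0 := by simp [bcount]

lemma bcount_one (ξ : ℕ → Bool) : bcount ξ 1 = 0 := by
  unfold bcount
  rw [Finset.filter_false_of_mem, Finset.card_empty]
  intro k _ hcon
  have h2 : 2 ≤ 2 ^ (k + 1) := by
    calc (2 : ℕ) = 2 ^ 1 := rfl
    _ ≤ 2 ^ (k + 1) := Nat.pow_le_pow_right (by norm_num) (by omega)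
  omega

lemma bcount_tendsto (ξ : ℕ → Bool) :
    Filter.Tendsto (bcount ξ) Filter.atTop Filter.atTop := by
  rw [Filter.tendsto_atTop_atTop]
  intro N
  refine ⟨2 ^ T N, fun n hn => ?_⟩
  calc N ≤ Cs N := le_Cs N
  _ = S ξ (T N) := (S_T ξ N).symm
  _ = bcount ξ (2 ^ T N) := (bcount_pow ξ (T N)).symm
  _ ≤ bcount ξ n := bcount_mono ξ hn



noncomputable def u (c : ℝ) (ξ : ℕ → Bool) (n : ℕ) : ℝ := c ^ bcount ξ n

noncomputable def ramp (k : ℕ) (x : ℝ) : ℝ := min 1 (max 0 ((2 : ℝ) ^ (k + 1) * x - 1))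

variable {c : ℝ} {ξ ζ : ℕ → Bool}

lemma u_pos (hc0 : 0 < c) (n : ℕ) : 0 < u c ξ n := pow_pos hc0 _

lemma u_zero : u c ξ 0 = 1 := by rw [u, bcount_zero, pow_zero]

lemma u_one : u c ξ 1 = 1 := by rw [u, bcount_one, pow_zero]

lemma u_antitone (hc0 : 0 ≤ c) (hc1 : c ≤ 1) : Antitone (u c ξ) :=
  fun _ _ hab => pow_le_pow_of_le_one hc0 hc1 (bcount_mono ξ hab)

lemma u_tendsto (hc0 : 0 ≤ c) (hc1 : c < 1) :
    Filter.Tendsto (u c ξ) Filter.atTop (nhds 0) :=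
  (tendsto_pow_atTop_nhds_zero_of_lt_one hc0 hc1).comp (bcount_tendsto ξ)

lemma w_nonneg (hc0 : 0 ≤ c) (hc1 : c ≤ 1) (k : ℕ) : 0 ≤ u c ξ k - u c ξ (k + 1) :=
  sub_nonneg.2 (u_antitone hc0 hc1 (Nat.le_succ k))

lemma sum_range_w (N : ℕ) :
    ∑ i ∈ Finset.range N, (u c ξ i - u c ξ (i + 1)) = 1 - u c ξ N := by
  rw [Finset.sum_range_sub' (u c ξ), u_zero]

lemma summable_w (hc0 : 0 ≤ c) (hc1 : c ≤ 1) :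
    Summable (fun k => u c ξ k - u c ξ (k + 1)) :=
  summable_of_sum_range_le (c := 1) (w_nonneg hc0 hc1) (fun n => by
    rw [sum_range_w]
    have : (0 : ℝ) ≤ u c ξ n := pow_nonneg hc0 _
    linarith)

lemma ramp_nonneg (k : ℕ) (x : ℝ) : 0 ≤ ramp k x :=
  le_min zero_le_one (le_max_left 0 _)

lemma ramp_le_one (k : ℕ) (x : ℝ) : ramp k x ≤ 1 := min_le_left _ _

lemma ramp_mono (k : ℕ) : Monotone (ramp k) := by
  intro x y hxy
  unfold ramp
  have h : (2 : ℝ) ^ (k + 1) * x - 1 ≤ (2 : ℝ) ^ (k + 1) * y - 1 := by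
    have : (0 : ℝ) ≤ 2 ^ (k + 1) := by positivity
    nlinarith
  exact min_le_min le_rfl (max_le_max le_rfl h)

lemma ramp_continuous (k : ℕ) : Continuous (ramp k) :=
  continuous_const.min (continuous_const.max
    ((continuous_const.mul continuous_id).sub continuous_const))

lemma ramp_half (k m : ℕ) :
    ramp k ((1 / 2 : ℝ) ^ m) = if m ≤ k then 1 else 0 := by
  have h2m : (0 : ℝ) < 2 ^ m := by positivity
  have hval : (2 : ℝ) ^ (k + 1) * (1 / 2) ^ m = 2 ^ (k + 1) / 2 ^ m := by
    rw [one_div, inv_pow, div_eq_mul_inv]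
  by_cases h : m ≤ k
  · have key : (2 : ℝ) ≤ 2 ^ (k + 1) * (1 / 2) ^ m := by
      rw [hval, le_div_iff₀ h2m]
      calc (2 : ℝ) * 2 ^ m = 2 ^ (m + 1) := by rw [pow_succ]; ring
      _ ≤ 2 ^ (k + 1) := by
        apply pow_le_pow_right₀ (by norm_num) (by omega)
    rw [if_pos h]
    unfold ramp
    rw [max_eq_right (by linarith), min_eq_left (by linarith)]
  · have key : (2 : ℝ) ^ (k + 1) * (1 / 2) ^ m ≤ 1 := by
      rw [hval, div_le_one h2m]
      apply pow_le_pow_right₀ (by norm_num) (by omega)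
    rw [if_neg h]
    unfold ramp
    rw [max_eq_left (by linarith), min_eq_right (by norm_num)]

noncomputable def phi (c : ℝ) (ξ : ℕ → Bool) (x : unitInterval) : ℝ :=
  ∑' k, (u c ξ k - u c ξ (k + 1)) * ramp k (x : ℝ)

lemma summable_term (hc0 : 0 ≤ c) (hc1 : c ≤ 1) (x : ℝ) :
    Summable (fun k => (u c ξ k - u c ξ (k + 1)) * ramp k x) := by
  apply Summable.of_nonneg_of_le
    (fun k => mul_nonneg (w_nonneg hc0 hc1 k) (ramp_nonneg k x))
    (fun k => mul_le_of_le_one_right (w_nonneg hc0 hc1 k) (ramp_le_one k x))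
    (summable_w hc0 hc1)

lemma phi_continuous (hc0 : 0 ≤ c) (hc1 : c ≤ 1) : Continuous (phi c ξ) := by
  apply continuous_tsum
    (fun k => (continuous_const.mul ((ramp_continuous k).comp continuous_subtype_val)))
    (summable_w hc0 hc1)
  intro k x
  simp only [Pi.mul_apply, Function.comp_apply]
  rw [Real.norm_eq_abs, abs_of_nonneg (mul_nonneg (w_nonneg hc0 hc1 k) (ramp_nonneg k _))]
  exact mul_le_of_le_one_right (w_nonneg hc0 hc1 k) (ramp_le_one k _)

lemma phi_monotone (hc0 : 0 ≤ c) (hc1 : c ≤ 1) : Monotone (phi c ξ) := by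
  intro x y hxy
  have h : (x : ℝ) ≤ (y : ℝ) := hxy
  exact Summable.tsum_le_tsum
    (fun k => mul_le_mul_of_nonneg_left (ramp_mono k h) (w_nonneg hc0 hc1 k))
    (summable_term hc0 hc1 _) (summable_term hc0 hc1 _)

lemma phi_nonneg (hc0 : 0 ≤ c) (hc1 : c ≤ 1) (x : unitInterval) : 0 ≤ phi c ξ x :=
  tsum_nonneg (fun k => mul_nonneg (w_nonneg hc0 hc1 k) (ramp_nonneg k _))

lemma hasSum_w_tail (hc0 : 0 ≤ c) (hc1 : c < 1) (m : ℕ) :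
    HasSum (fun k => u c ξ (k + m) - u c ξ (k + m + 1)) (u c ξ m) := by
  have hs : Summable (fun k => u c ξ (k + m) - u c ξ (k + m + 1)) :=
    (summable_nat_add_iff (f := fun k => u c ξ k - u c ξ (k + 1)) m).2
      (summable_w hc0 hc1.le)
  have h1 := hs.hasSum
  have h2 := h1.tendsto_sum_nat
  have hps : ∀ N, ∑ i ∈ Finset.range N, (u c ξ (i + m) - u c ξ (i + m + 1))
      = u c ξ m - u c ξ (N + m) := by
    intro N
    have h := Finset.sum_range_sub' (fun i => u c ξ (i + m)) N
    simp only [zero_add] at h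
    calc ∑ i ∈ Finset.range N, (u c ξ (i + m) - u c ξ (i + m + 1))
        = ∑ i ∈ Finset.range N, (u c ξ (i + m) - u c ξ (i + 1 + m)) := by
          apply Finset.sum_congr rfl
          intro i _
          rw [show i + m + 1 = i + 1 + m from by omega]
      _ = u c ξ m - u c ξ (N + m) := h
  have h3 : Filter.Tendsto
      (fun N => ∑ i ∈ Finset.range N, (u c ξ (i + m) - u c ξ (i + m + 1)))
      Filter.atTop (nhds (u c ξ m)) := by
    simp only [hps]
    have hlim : Filter.Tendsto (fun N : ℕ => u c ξ (N + m)) Filter.atTop (nhds 0) :=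
      (u_tendsto hc0 hc1).comp (Filter.tendsto_add_atTop_nat m)
    have h4 := (tendsto_const_nhds (x := u c ξ m) (f := Filter.atTop (α := ℕ))).sub hlim
    simpa using h4
  have := tendsto_nhds_unique h2 h3
  rwa [this] at h1

lemma coe_half (m : ℕ) : ((⟨(1 / 2 : ℝ) ^ m, by positivity,
    pow_le_one₀ (by norm_num) (by norm_num)⟩ : unitInterval) : ℝ) = (1 / 2 : ℝ) ^ m := rfl

lemma phi_half (hc0 : 0 ≤ c) (hc1 : c < 1) (m : ℕ) (x : unitInterval)
    (hx : (x : ℝ) = (1 / 2 : ℝ) ^ m) : phi c ξ x = u c ξ m := by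
  unfold phi
  rw [hx]
  simp only [ramp_half]
  have key : HasSum (fun k => (u c ξ k - u c ξ (k + 1)) * if m ≤ k then (1 : ℝ) else 0)
      (u c ξ m) := by
    have h0 : HasSum (fun k =>
        (u c ξ (k + m) - u c ξ (k + m + 1)) * if m ≤ k + m then (1 : ℝ) else 0)
        (u c ξ m) := by
      have h := hasSum_w_tail (ξ := ξ) hc0 hc1 m
      have he : (fun k =>
          (u c ξ (k + m) - u c ξ (k + m + 1)) * if m ≤ k + m then (1 : ℝ) else 0)
          = fun k => u c ξ (k + m) - u c ξ (k + m + 1) := by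
        funext k
        rw [if_pos (Nat.le_add_left m k), mul_one]
      rw [he]
      exact h
    have h1 := (hasSum_nat_add_iff
      (f := fun k => (u c ξ k - u c ξ (k + 1)) * if m ≤ k then (1 : ℝ) else 0) m).1 h0
    have hz : ∑ i ∈ Finset.range m,
        ((u c ξ i - u c ξ (i + 1)) * if m ≤ i then (1 : ℝ) else 0) = 0 := by
      apply Finset.sum_eq_zero
      intro i hi
      have him : i < m := Finset.mem_range.1 hi
      rw [if_neg (by omega)]
      ring
    rw [hz, add_zero] at h1
    exact h1
  exact key.tsum_eq

lemma maxTerm_eq {δ : ℝ} (hd0 : 0 ≤ δ) (hc0 : 0 ≤ c) (hc1 : c ≤ 1) (ξ : ℕ → Bool) (K : ℕ) :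
    maxTerm δ (u c ξ) (2 ^ (K + 1)) = δ * u c ξ (2 ^ (K + 1) - 1) := by
  have hn2 : 2 ≤ 2 ^ (K + 1) := by
    calc (2 : ℕ) = 2 ^ 1 := rfl
    _ ≤ 2 ^ (K + 1) := Nat.pow_le_pow_right (by norm_num) (by omega)
  apply IsGreatest.csSup_eq
  constructor
  · refine ⟨1, ⟨le_refl 1, by omega⟩, ?_⟩
    show δ * u c ξ 1 * u c ξ (2 ^ (K + 1) - 1) = δ * u c ξ (2 ^ (K + 1) - 1)
    rw [u_one]
    ring
  · rintro x ⟨i, hi, rfl⟩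
    rw [Set.mem_Icc] at hi
    have hC : bcount ξ (2 ^ (K + 1) - 1) ≤ bcount ξ i + bcount ξ (2 ^ (K + 1) - i) :=
      bcount_C (by omega)
    calc δ * u c ξ i * u c ξ (2 ^ (K + 1) - i)
        = δ * c ^ (bcount ξ i + bcount ξ (2 ^ (K + 1) - i)) := by
          rw [pow_add, u, u]; ring
      _ ≤ δ * c ^ (bcount ξ (2 ^ (K + 1) - 1)) :=
          mul_le_mul_of_nonneg_left (pow_le_pow_of_le_one hc0 hc1 hC) hd0
      _ = δ * u c ξ (2 ^ (K + 1) - 1) := rfl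

lemma recursion {δ lam : ℝ} (hd0 : 0 ≤ δ) (hc0 : 0 ≤ c) (hc1 : c ≤ 1)
    (hcdef : c = lam + (1 - lam) * δ) (ξ : ℕ → Bool) (n : ℕ) (hn : 1 < n) :
    u c ξ n = u c ξ (n - 1) ∨
      u c ξ n = lam * u c ξ (n - 1) + (1 - lam) * maxTerm δ (u c ξ) n := by
  by_cases h : ∃ K, 2 ^ (K + 1) = n ∧ sel ξ K = true
  · right
    obtain ⟨K, hKn, hsel⟩ := h
    subst hKn
    rw [maxTerm_eq hd0 hc0 hc1]
    show c ^ bcount ξ (2 ^ (K + 1)) = _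
    rw [bcount_drop ξ K hsel, pow_succ]
    show _ = lam * c ^ bcount ξ (2 ^ (K + 1) - 1) +
      (1 - lam) * (δ * c ^ bcount ξ (2 ^ (K + 1) - 1))
    rw [hcdef]
    ring
  · left
    push_neg at h
    show c ^ bcount ξ n = c ^ bcount ξ (n - 1)
    rw [bcount_stay ξ n (by omega)]
    intro k hk
    have := h k hk
    simpa using this

lemma checkpoint (hc0 : 0 < c) {j : ℕ} (hj : ξ j ≠ ζ j) (P : ℕ) :
    ∃ n, P ≤ n ∧ u c ξ n / u c ζ n = c ^ (P + 1) := by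
  classical
  have hz : ζ j = !(ξ j) := by
    cases hξ : ξ j <;> cases hζ : ζ j <;> simp_all
  set e : ℕ := if ξ j = true then 0 else 1 with he
  set s : ℕ := 2 * Nat.pair j P + e with hs
  have he2 : e = 0 ∨ e = 1 := by
    rw [he]; split <;> simp
  have hdiv : s / 2 = Nat.pair j P := by omega
  have hmod : s % 2 = e := by omega
  have hjs : js s = j := by rw [js, hdiv, Nat.unpair_pair]
  have hms : ms s = P + 1 := by rw [ms, hdiv, Nat.unpair_pair]
  have hfcξ : fc ξ s = true := by
    rw [fc, hjs]
    cases hb : ξ j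
    · have he1 : e = 1 := by rw [he]; simp [hb]
      have : s % 2 = 1 := by omega
      simp [this]
    · have he0 : e = 0 := by rw [he]; simp [hb]
      have : s % 2 = 0 := by omega
      simp [this]
  have hfcζ : fc ζ s = false := by
    rw [fc, hjs, hz]
    cases hb : ξ j
    · have he1 : e = 1 := by rw [he]; simp [hb]
      have : s % 2 = 1 := by omega
      simp [this]
    · have he0 : e = 0 := by rw [he]; simp [hb]
      have : s % 2 = 0 := by omega
      simp [this]
  refine ⟨2 ^ (T s + ms s), ?_, ?_⟩
  · calc P ≤ Nat.pair j P := Nat.right_le_pair j P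
    _ ≤ s := by omega
    _ ≤ 2 * s := by omega
    _ ≤ T s := two_mul_le_T s
    _ ≤ T s + ms s := Nat.le_add_right _ _
    _ ≤ 2 ^ (T s + ms s) := (Nat.lt_two_pow_self (n := T s + ms s)).le
  · show c ^ bcount ξ _ / c ^ bcount ζ _ = _
    rw [bcount_pow, bcount_pow, S_mid, S_mid, hfcξ, hfcζ]
    simp only [if_true, if_false, Bool.false_eq_true]
    rw [hms, add_zero, pow_add]
    exact mul_div_cancel_left₀ _ (pow_ne_zero _ hc0.ne')

lemma liminf_zero (hc0 : 0 < c) (hc1 : c < 1) {j : ℕ} (hj : ξ j ≠ ζ j) :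
    Filter.liminf (fun n => u c ξ n / u c ζ n) Filter.atTop = 0 := by
  have hpos : ∀ n, 0 < u c ξ n / u c ζ n := fun n => div_pos (u_pos hc0 n) (u_pos hc0 n)
  have hbdd : Filter.IsBoundedUnder (· ≥ ·) Filter.atTop (fun n => u c ξ n / u c ζ n) :=
    Filter.isBoundedUnder_of ⟨0, fun n => (hpos n).le⟩
  have hfreq : ∀ ε : ℝ, 0 < ε → ∃ᶠ n in Filter.atTop, u c ξ n / u c ζ n ≤ ε := by
    intro ε hε
    rw [Filter.frequently_atTop]
    intro a
    obtain ⟨M, hM⟩ := exists_pow_lt_of_lt_one hε hc1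
    obtain ⟨n, hn, hval⟩ := checkpoint hc0 hj (max M a)
    refine ⟨n, le_trans (le_max_right M a) hn, ?_⟩
    rw [hval]
    exact le_of_lt (lt_of_le_of_lt
      (pow_le_pow_of_le_one hc0.le hc1.le (by omega : M ≤ max M a + 1)) hM)
  apply le_antisymm
  · have h1 : ∀ ε : ℝ, 0 < ε →
        Filter.liminf (fun n => u c ξ n / u c ζ n) Filter.atTop ≤ ε :=
      fun ε hε => Filter.liminf_le_of_frequently_le (hfreq ε hε) hbdd
    apply le_of_forall_pos_le_add
    intro ε hε
    simpa using h1 ε hε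
  · apply Filter.le_liminf_of_le
    · refine ⟨1, fun a ha => ?_⟩
      obtain ⟨n, hn1, hn2⟩ := ((hfreq 1 one_pos).and_eventually ha).exists
      exact le_trans hn2 hn1
    · exact Filter.Eventually.of_forall (fun n => (hpos n).le)

end PhiAux

/-- There is a continuum-sized family `{φ_ξ : ξ ∈ {0,1}^ω}` of continuous increasing
functions, each of whose values at `1/2ⁿ` satisfy the recursion, such that for
distinct `ξ, ζ` both liminfs of the quotients vanish. -/
theorem phi_family_exists (δ lam : ℝ)
    (hδ0 : 0 < δ) (hδ1 : δ < 1) (hlam0 : 0 < lam) (hlam1 : lam < 1) :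
    ∃ φ : (ℕ → Bool) → unitInterval → ℝ,
      (∀ ξ : ℕ → Bool, Continuous (φ ξ) ∧ Monotone (φ ξ) ∧ (∀ x, 0 ≤ φ ξ x) ∧
        φ ξ (half 0) = 1 ∧ φ ξ (half 1) = 1 ∧
        (∀ n : ℕ, 1 < n → φ ξ (half n) = φ ξ (half (n - 1)) ∨
          φ ξ (half n) = lam * φ ξ (half (n - 1)) +
            (1 - lam) * maxTerm δ (fun k => φ ξ (half k)) n)) ∧
      (∀ ξ ζ : ℕ → Bool, ξ ≠ ζ →
        Filter.liminf (fun n => φ ξ (half n) / φ ζ (half n)) Filter.atTop = 0 ∧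
        Filter.liminf (fun n => φ ζ (half n) / φ ξ (half n)) Filter.atTop = 0) := by
  set c : ℝ := lam + (1 - lam) * δ with hcdef
  have hc0 : 0 < c := by nlinarith
  have hc1 : c < 1 := by nlinarith
  have hhalf : ∀ m : ℕ, ((half m : unitInterval) : ℝ) = (1 / 2 : ℝ) ^ m := fun m => rfl
  have hph : ∀ (ξ : ℕ → Bool) (m : ℕ), PhiAux.phi c ξ (half m) = PhiAux.u c ξ m :=
    fun ξ m => PhiAux.phi_half hc0.le hc1 m (half m) (hhalf m)
  refine ⟨fun ξ => PhiAux.phi c ξ, fun ξ => ⟨PhiAux.phi_continuous hc0.le hc1.le,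
    PhiAux.phi_monotone hc0.le hc1.le, PhiAux.phi_nonneg hc0.le hc1.le, ?_, ?_, ?_⟩, ?_⟩
  · show PhiAux.phi c ξ (half 0) = 1
    rw [hph ξ 0, PhiAux.u_zero]
  · show PhiAux.phi c ξ (half 1) = 1
    rw [hph ξ 1, PhiAux.u_one]
  · intro n hn
    have hfun : (fun k => PhiAux.phi c ξ (half k)) = PhiAux.u c ξ :=
      funext fun k => hph ξ k
    show PhiAux.phi c ξ (half n) = PhiAux.phi c ξ (half (n - 1)) ∨
      PhiAux.phi c ξ (half n) = lam * PhiAux.phi c ξ (half (n - 1)) +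
        (1 - lam) * maxTerm δ (fun k => PhiAux.phi c ξ (half k)) n
    rw [hph ξ n, hph ξ (n - 1), hfun]
    exact PhiAux.recursion hδ0.le hc0.le hc1.le hcdef ξ n hn
  · intro ξ ζ hne
    obtain ⟨j, hj⟩ := Function.ne_iff.1 hne
    constructor
    · have := PhiAux.liminf_zero (ξ := ξ) (ζ := ζ) hc0 hc1 hj
      simpa only [hph] using this
    · have := PhiAux.liminf_zero (ξ := ζ) (ζ := ξ) hc0 hc1 (Ne.symm hj)
      simpa only [hph] using this
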